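/- Let T : c₀ → c₀ be a positive bounded linear operator and let e_k denote the k-th canonical unit sequence. Then ‖T‖ = sup_{v∈ℕ} Σ_{k=1}^∞ (T e_k)_v. -/

import Mathlib

open scoped ZeroAtInfty
open Finset Filter

/-- Let `T` be a positive bounded linear operator on `c₀ = C₀(ℕ, ℝ)`
and let `e k` denote the `k`-th canonical unit sequence. Then
`‖T‖ = sup_v ∑_k (T e_k)_v`. -/
theorem norm_of_positive_operator_on_c0
    (T : C₀(ℕ, ℝ) →L[ℝ] C₀(ℕ, ℝ))
    (hT : ∀ x : C₀(ℕ, ℝ), (∀ k : ℕ, 0 ≤ x k) → ∀ k : ℕ, 0 ≤ T x k)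
    (e : ℕ → C₀(ℕ, ℝ)) (he : ∀ k n : ℕ, e k n = if n = k then 1 else 0) :
    ‖T‖ = ⨆ v : ℕ, ∑' k : ℕ, T (e k) v := by
  have habs : ∀ (f : C₀(ℕ, ℝ)) (v : ℕ), |f v| ≤ ‖f‖ := by
    intro f v
    have := BoundedContinuousFunction.norm_coe_le_norm f.toBCF v
    simpa [ZeroAtInftyContinuousMap.norm_toBCF_eq_norm] using this
  have hnormle : ∀ (f : C₀(ℕ, ℝ)) (C : ℝ), 0 ≤ C → (∀ v, |f v| ≤ C) → ‖f‖ ≤ C := by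
    intro f C hC h
    rw [← ZeroAtInftyContinuousMap.norm_toBCF_eq_norm]
    exact (BoundedContinuousFunction.norm_le hC).2 (by simpa using h)
  have hev : ∀ (s : Finset ℕ) (f : ℕ → C₀(ℕ, ℝ)) (m : ℕ),
      (∑ k ∈ s, f k) m = ∑ k ∈ s, f k m := by
    intro s f m
    exact map_sum (⟨⟨fun g => g m, rfl⟩, fun a b => rfl⟩ : C₀(ℕ, ℝ) →+ ℝ) f s
  have ha : ∀ v k, 0 ≤ T (e k) v := by
    intro v k
    exact hT (e k) (fun n => by rw [he]; positivity) v
  have hsum_e : ∀ n m : ℕ, (∑ k ∈ range n, e k) m = if m ∈ range n then 1 else 0 := by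
    intro n m
    rw [hev]
    simp_rw [he]
    exact Finset.sum_ite_eq (range n) m (fun _ => (1:ℝ))
  have hpartial : ∀ (v n : ℕ), ∑ k ∈ range n, T (e k) v ≤ ‖T‖ := by
    intro v n
    have h1 : ∑ k ∈ range n, T (e k) v = T (∑ k ∈ range n, e k) v := by
      rw [map_sum, hev]
    rw [h1]
    refine le_trans (le_abs_self _) (le_trans (habs _ _) ?_)
    calc ‖T (∑ k ∈ range n, e k)‖ ≤ ‖T‖ * ‖∑ k ∈ range n, e k‖ := T.le_opNorm _
      _ ≤ ‖T‖ * 1 := mul_le_mul_of_nonneg_left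
          (hnormle _ 1 one_pos.le fun v => by rw [hsum_e]; split <;> simp) (norm_nonneg T)
      _ = ‖T‖ := mul_one _
  have hsummable : ∀ v, Summable fun k => T (e k) v := fun v =>
    summable_of_sum_range_le (fun k => ha v k) (hpartial v)
  have htsum_le : ∀ v, ∑' k, T (e k) v ≤ ‖T‖ := fun v =>
    Summable.tsum_le_of_sum_range_le (hsummable v) (hpartial v)
  have hbdd : BddAbove (Set.range fun v => ∑' k, T (e k) v) := ⟨‖T‖, by
    rintro _ ⟨v, rfl⟩; exact htsum_le v⟩
  set S := ⨆ v : ℕ, ∑' k : ℕ, T (e k) v with hS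
  have hS0 : 0 ≤ S := le_trans (tsum_nonneg (ha 0)) (le_ciSup hbdd 0)
  have htsum_le_S : ∀ v, ∑' k, T (e k) v ≤ S := fun v => le_ciSup hbdd v
  refine le_antisymm ?_ (ciSup_le htsum_le)
  refine T.opNorm_le_bound hS0 ?_
  intro x
  have key : ∀ v : ℕ, |T x v| ≤ S * ‖x‖ := by
    intro v
    refine le_of_forall_pos_le_add ?_
    intro ε hε
    set ε' : ℝ := ε / (‖T‖ + 1) with hε'
    have hε'0 : 0 < ε' := div_pos hε (by positivity)
    have hza : Tendsto (⇑x) atTop (nhds 0) := by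
      have := zero_at_infty x
      rwa [cocompact_eq_atTop] at this
    obtain ⟨N, hN⟩ := (Metric.tendsto_atTop.1 hza ε' hε'0)
    set xN : C₀(ℕ, ℝ) := ∑ k ∈ range N, x k • e k with hxN
    have hxNval : ∀ m, xN m = if m ∈ range N then x m else 0 := by
      intro m
      rw [hxN, hev]
      simp_rw [ZeroAtInftyContinuousMap.coe_smul, Pi.smul_apply, he, smul_eq_mul,
        mul_ite, mul_one, mul_zero]
      exact Finset.sum_ite_eq (range N) m (fun k => x k)
    have hr : ‖x - xN‖ ≤ ε' := by
      refine hnormle _ _ hε'0.le fun m => ?_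
      have h2 : (x - xN) m = x m - xN m := by simp
      rw [h2, hxNval]
      split_ifs with h
      · simpa using hε'0.le
      · simp only [sub_zero]
        have := hN m (not_lt.1 (by simpa [Finset.mem_range] using h))
        rw [Real.dist_eq, sub_zero] at this
        exact this.le
    have hTxN : |T xN v| ≤ S * ‖x‖ := by
      have h1 : T xN v = ∑ k ∈ range N, x k * T (e k) v := by
        rw [hxN, map_sum, hev]
        simp
      rw [h1]
      calc |∑ k ∈ range N, x k * T (e k) v| ≤ ∑ k ∈ range N, |x k * T (e k) v| :=
            Finset.abs_sum_le_sum_abs _ _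
        _ ≤ ∑ k ∈ range N, ‖x‖ * T (e k) v := by
            refine Finset.sum_le_sum fun k _ => ?_
            rw [abs_mul, abs_of_nonneg (ha v k)]
            exact mul_le_mul_of_nonneg_right (habs x k) (ha v k)
        _ = ‖x‖ * ∑ k ∈ range N, T (e k) v := by rw [Finset.mul_sum]
        _ ≤ ‖x‖ * ∑' k, T (e k) v := mul_le_mul_of_nonneg_left
            ((hsummable v).sum_le_tsum _ (fun k _ => ha v k)) (norm_nonneg x)
        _ ≤ ‖x‖ * S := mul_le_mul_of_nonneg_left (htsum_le_S v) (norm_nonneg x)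
        _ = S * ‖x‖ := mul_comm _ _
    have hTr : |T (x - xN) v| ≤ ε := by
      calc |T (x - xN) v| ≤ ‖T (x - xN)‖ := habs _ _
        _ ≤ ‖T‖ * ‖x - xN‖ := T.le_opNorm _
        _ ≤ ‖T‖ * ε' := mul_le_mul_of_nonneg_left hr (norm_nonneg T)
        _ ≤ (‖T‖ + 1) * ε' := by nlinarith [norm_nonneg T]
        _ = ε := by rw [hε']; field_simp
    calc |T x v| = |T xN v + T (x - xN) v| := by
          rw [show x = xN + (x - xN) by abel, map_add]
          simp
      _ ≤ |T xN v| + |T (x - xN) v| := abs_add_le _ _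
      _ ≤ S * ‖x‖ + ε := add_le_add hTxN hTr
  exact hnormle _ _ (mul_nonneg hS0 (norm_nonneg x)) key
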